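/- Let p ≥ 1 be an integer and define h₂(c) = ∑_{j=−p}^{p} F_{p,j}(c) · j^{2p+2} − c^{2p+2}. Then for every c in the interval [0,1]: h₂(c) ≤ 0 if p is even, and h₂(c) ≥ 0 if p is odd; equivalently, (−1)^p · h₂(c) ≤ 0 for all c ∈ [0,1]. (This is the sign condition ensuring linear L²-stability of the order-2p Lax–Wendroff method under the CFL-1 condition.) -/
import Mathlib


/-- Lagrange basis polynomial `F_{p,j}` on nodes `-p, …, p`. -/
noncomputable def Fpoly (p : ℕ) (j : ℤ) (x : ℝ) : ℝ :=
  ∏ r ∈ (Finset.Icc (-(p:ℤ)) (p:ℤ)).erase j, (x - (r:ℝ)) / ((j:ℝ) - (r:ℝ))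

/-- `δ^k_{p,j} = F_{p,j}^{(k)}(0)`. -/
noncomputable def delta (p k : ℕ) (j : ℤ) : ℝ := iteratedDeriv k (Fpoly p j) 0

open Polynomial Finset

lemma Fpoly_eq_basis_eval (p : ℕ) (j : ℤ) (x : ℝ) :
    Fpoly p j x = (Lagrange.basis (Finset.Icc (-(p:ℤ)) (p:ℤ)) (fun i : ℤ => (i : ℝ)) j).eval x := by
  unfold Fpoly Lagrange.basis
  rw [eval_prod]
  refine Finset.prod_congr rfl fun r _ => ?_
  simp [Lagrange.basisDivisor, div_eq_inv_mul]

/-- The key polynomial identity: the interpolant of `x^(2p+2)` at nodes `-p..p`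
equals `x^(2p+2) - x^2 * ∏_{r=1}^p (x^2 - r^2)`. -/
lemma interp_eval (p : ℕ) (hp : 1 ≤ p) (c : ℝ) :
    (∑ j ∈ Finset.Icc (-(p:ℤ)) (p:ℤ), Fpoly p j c * (j:ℝ)^(2*p+2))
      = c^(2*p+2) - c^2 * ∏ r ∈ Finset.Icc 1 p, (c^2 - (r:ℝ)^2) := by
  classical
  set v : ℤ → ℝ := fun i => (i : ℝ) with hv
  set s : Finset ℤ := Finset.Icc (-(p:ℤ)) (p:ℤ) with hs
  have hvs : Set.InjOn v s := fun a _ b _ h => Int.cast_injective h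
  set R : ℝ[X] := X * ∏ r ∈ Finset.Icc 1 p, (X - C ((r:ℝ)^2)) with hR
  set P : ℝ[X] := X^(2*p+2) - Polynomial.expand ℝ 2 R with hP
  have hRmonic : R.Monic := (monic_X).mul (monic_prod_of_monic _ _ fun r _ => monic_X_sub_C _)
  have hRdeg : R.natDegree = p + 1 := by
    rw [hR, natDegree_mul X_ne_zero, natDegree_X, natDegree_prod]
    · rw [Finset.sum_congr rfl (fun x _ => natDegree_X_sub_C (((x:ℕ):ℝ)^2)),
        Finset.sum_const, smul_eq_mul, mul_one, Nat.card_Icc]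
      omega
    · intro r _; exact X_sub_C_ne_zero _
    · exact Finset.prod_ne_zero_iff.2 fun r _ => X_sub_C_ne_zero _
  have hEmonic : (Polynomial.expand ℝ 2 R).Monic := by
    unfold Polynomial.Monic
    rw [leadingCoeff_expand (by norm_num)]
    exact hRmonic
  have hEdeg : (Polynomial.expand ℝ 2 R).natDegree = 2*p+2 := by
    rw [natDegree_expand, hRdeg]; ring
  -- degree of P is less than 2p+1
  have h1 : P.degree < ((2*p+2 : ℕ) : WithBot ℕ) := by
    have := degree_sub_lt (p := (X:ℝ[X])^(2*p+2)) (q := Polynomial.expand ℝ 2 R)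
      (by rw [degree_X_pow, Polynomial.degree_eq_natDegree hEmonic.ne_zero, hEdeg])
      (pow_ne_zero _ X_ne_zero) (by rw [leadingCoeff_X_pow, hEmonic.leadingCoeff])
    rwa [degree_X_pow] at this
  have hcoeff : P.coeff (2*p+1) = 0 := by
    rw [hP, coeff_sub, coeff_X_pow, if_neg (by omega),
      coeff_expand (by norm_num : (0:ℕ) < 2), if_neg (by omega)]
    ring
  have hPdeg : P.degree < ((2*p+1 : ℕ) : WithBot ℕ) := by
    have h2 : P.degree ≤ ((2*p : ℕ) : WithBot ℕ) := by
      rw [Polynomial.degree_le_iff_coeff_zero]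
      intro m hm
      have hm' : 2*p < m := by exact_mod_cast hm
      by_cases hme : m = 2*p+1
      · subst hme; exact hcoeff
      · exact coeff_eq_zero_of_degree_lt (lt_of_lt_of_le h1 (by exact_mod_cast by omega))
    exact lt_of_le_of_lt h2 (by exact_mod_cast by omega)
  have hcard : #s = 2*p+1 := by
    rw [hs, Int.card_Icc]
    omega
  have key : Lagrange.interpolate s v (fun j => P.eval (v j)) = P :=
    (Lagrange.eq_interpolate hvs (by rw [hcard]; exact hPdeg)).symm
  -- values at the nodes
  have hval : ∀ j ∈ s, P.eval (v j) = (j:ℝ)^(2*p+2) := by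
    intro j hj
    have hprod : (v j)^2 * ∏ r ∈ Finset.Icc 1 p, ((v j)^2 - (r:ℝ)^2) = 0 := by
      by_cases hj0 : j = 0
      · simp [hj0, hv]
      · apply mul_eq_zero_of_right
        apply Finset.prod_eq_zero (i := j.natAbs)
        · rw [hs, Finset.mem_Icc] at hj
          rw [Finset.mem_Icc]
          omega
        · have : ((j.natAbs : ℝ))^2 = (v j)^2 := by
            rw [hv]
            push_cast [Nat.cast_natAbs]
            rw [sq_abs]
          rw [this]; ring
    rw [hP, eval_sub, eval_pow, eval_X, expand_eval, hR, eval_mul, eval_X, eval_prod]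
    simp only [eval_sub, eval_pow, eval_X, eval_C] at *
    rw [show (v j)^2 = v j ^ 2 from rfl] at hprod
    rw [hprod]
    ring
  -- evaluate the interpolation identity at c
  have := congrArg (Polynomial.eval c) key
  rw [Lagrange.interpolate_apply, eval_finset_sum] at this
  simp only [eval_mul, eval_C] at this
  calc (∑ j ∈ Finset.Icc (-(p:ℤ)) (p:ℤ), Fpoly p j c * (j:ℝ)^(2*p+2))
      = ∑ j ∈ s, P.eval (v j) * (Lagrange.basis s v j).eval c := by
        refine Finset.sum_congr rfl fun j hj => ?_
        rw [Fpoly_eq_basis_eval, hval j hj, mul_comm]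
    _ = P.eval c := this
    _ = c^(2*p+2) - c^2 * ∏ r ∈ Finset.Icc 1 p, (c^2 - (r:ℝ)^2) := by
        rw [hP, eval_sub, eval_pow, eval_X, expand_eval, hR, eval_mul, eval_X, eval_prod]
        simp [eval_sub, eval_pow]

theorem h2_sign_condition (p : ℕ) (hp : 1 ≤ p) (h₂ : ℝ → ℝ)
    (hh : ∀ c : ℝ, h₂ c =
      (∑ j ∈ Finset.Icc (-(p:ℤ)) (p:ℤ), Fpoly p j c * (j:ℝ)^(2*p+2)) - c^(2*p+2)) :
    ∀ c ∈ Set.Icc (0:ℝ) 1,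
      (Even p → h₂ c ≤ 0) ∧ (Odd p → 0 ≤ h₂ c) ∧ (-1:ℝ)^p * h₂ c ≤ 0 := by
  intro c hc
  obtain ⟨hc0, hc1⟩ := hc
  have hform : h₂ c = - (c^2 * ∏ r ∈ Finset.Icc 1 p, (c^2 - (r:ℝ)^2)) := by
    rw [hh c, interp_eval p hp c]; ring
  have hswap : ∏ r ∈ Finset.Icc 1 p, (c^2 - (r:ℝ)^2)
      = (-1:ℝ)^p * ∏ r ∈ Finset.Icc 1 p, ((r:ℝ)^2 - c^2) := by
    have : ∀ r ∈ Finset.Icc 1 p, c^2 - (r:ℝ)^2 = (-1) * ((r:ℝ)^2 - c^2) := fun r _ => by ring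
    rw [Finset.prod_congr rfl this, Finset.prod_mul_distrib, Finset.prod_const, Nat.card_Icc]
    norm_num
  have hK : 0 ≤ ∏ r ∈ Finset.Icc 1 p, ((r:ℝ)^2 - c^2) := by
    apply Finset.prod_nonneg
    intro r hr
    have h1r : 1 ≤ r := (Finset.mem_Icc.1 hr).1
    have : (1:ℝ) ≤ (r:ℝ) := by exact_mod_cast h1r
    nlinarith
  set K := ∏ r ∈ Finset.Icc 1 p, ((r:ℝ)^2 - c^2) with hKdef
  have hform' : h₂ c = -(c^2 * ((-1:ℝ)^p * K)) := by rw [hform, hswap]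
  have hc2 : 0 ≤ c^2 := sq_nonneg c
  refine ⟨fun hpe => ?_, fun hpo => ?_, ?_⟩
  · rw [hform', hpe.neg_one_pow]
    nlinarith
  · rw [hform', hpo.neg_one_pow]
    nlinarith
  · rw [hform']
    have : (-1:ℝ)^p * -(c^2 * ((-1:ℝ)^p * K)) = -(((-1:ℝ)^p)^2 * (c^2 * K)) := by ring
    rw [this, show ((-1:ℝ)^p)^2 = 1 by rw [← pow_mul, pow_mul'] ; norm_num]
    nlinarith
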